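/- Let $\lambda\in\mathbb{C}$ with $\operatorname{Re}\lambda \ge 1$ and write $\sqrt{2\lambda} = a+ib$ (principal square root, $a>0$). Let $x\in\mathbb{C}$ and $\bar{x}\in\mathbb{R}$ be such that $\operatorname{Re} x < \bar{x}$ and $|\operatorname{Im} x| \le (\bar{x} - \operatorname{Re} x)/2$. Then $\operatorname{Re}\bigl(\sqrt{2\lambda}\,(x - \bar{x})\bigr) \le -\tfrac{1}{4}\sqrt{|\lambda|}\,(\bar{x} - \operatorname{Re} x)$. -/

import Mathlib

/-- Key estimate for the analytic extension in the space variable: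
for `Re λ ≥ 1`, `Re x < x̄` and `|Im x| ≤ (x̄ - Re x)/2`, one has
`Re(√(2λ)(x - x̄)) ≤ -(1/4)√|λ| (x̄ - Re x)`. -/
theorem stmt8 (l : ℂ) (hl : 1 ≤ l.re) (x : ℂ) (xb : ℝ)
    (hx : x.re < xb) (him : |x.im| ≤ (xb - x.re) / 2) :
    ((2 * l) ^ ((1 : ℂ) / 2) * (x - (xb : ℂ))).re ≤
      -(1 / 4) * Real.sqrt (‖l‖) * (xb - x.re) := by
  set s := (2 * l) ^ ((1 : ℂ) / 2) with hs
  have h12 : (1 : ℂ) / 2 = (2⁻¹ : ℂ) := by norm_num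
  have habs : ‖2 * l‖ = 2 * ‖l‖ := by
    rw [norm_mul, Complex.norm_two]
  have hre2 : (2 * l).re = 2 * l.re := by simp
  have ha : s.re = Real.sqrt ((2 * ‖l‖ + 2 * l.re) / 2) := by
    rw [hs, h12, Complex.cpow_inv_two_re, habs, hre2]
  have hb : |s.im| = Real.sqrt ((2 * ‖l‖ - 2 * l.re) / 2) := by
    rw [hs, h12, Complex.abs_cpow_inv_two_im, habs, hre2]
  have hla : l.re ≤ ‖l‖ := Complex.re_le_norm l
  have hba : |s.im| ≤ s.re := by
    rw [ha, hb]
    apply Real.sqrt_le_sqrt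
    linarith
  have hal : Real.sqrt (‖l‖) ≤ s.re := by
    rw [ha]
    apply Real.sqrt_le_sqrt
    linarith
  have hre : (s * (x - (xb : ℂ))).re = s.re * (x.re - xb) - s.im * x.im := by
    simp [Complex.mul_re]
  rw [hre]
  have h1 : -(s.im * x.im) ≤ |s.im| * |x.im| := by
    calc -(s.im * x.im) ≤ |s.im * x.im| := neg_le_abs _
    _ = |s.im| * |x.im| := abs_mul _ _
  have h2 : |s.im| * |x.im| ≤ s.re * ((xb - x.re) / 2) :=
    mul_le_mul hba him (abs_nonneg _) (le_trans (Real.sqrt_nonneg _) hal)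
  have hd : 0 < xb - x.re := by linarith
  have h3 : Real.sqrt (‖l‖) * (xb - x.re) ≤ s.re * (xb - x.re) :=
    mul_le_mul_of_nonneg_right hal hd.le
  nlinarith [Real.sqrt_nonneg (‖l‖)]
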